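/- For positive integers l₁,…,l_r (not necessarily l_r ≥ 2), the power series ∑_{a=0}^∞ z^a ζ_a^*(l₁,…,l_r) converges absolutely for |z| < 1. -/

import Mathlib

open scoped BigOperators
open Real

/-- The multiple zeta value `ζ(k₁,…,k_d) = ∑_{0<m₁<⋯<m_d} ∏ 1/m_i^{k_i}`
(as a `tsum` over strictly increasing tuples of positive integers). -/
noncomputable def MZV (k : List ℕ) : ℝ :=
  ∑' m : {f : Fin k.length → ℕ+ // StrictMono f}, ∏ i, 1 / ((m.1 i : ℕ) : ℝ) ^ k.get i

/-- The stuffle (quasi-shuffle) product of two words, as a multiset of words. -/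
def stuffle : List ℕ → List ℕ → Multiset (List ℕ)
  | [], v => {v}
  | u, [] => {u}
  | a :: u, b :: v =>
      (stuffle u (b :: v)).map (a :: ·) + (stuffle (a :: u) v).map (b :: ·) +
        (stuffle u v).map ((a + b) :: ·)
  termination_by u v => u.length + v.length

/-- All contractions of a word: the results of replacing each comma by `,` or `+`. -/
def contractions : List ℕ → Multiset (List ℕ)
  | [] => {[]}
  | [a] => {[a]}
  | a :: b :: t => (contractions (b :: t)).map (a :: ·) + contractions ((a + b) :: t)
  termination_by l => l.length

/-- `Z` is a stuffle (harmonic) regularization of multiple zeta values: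
it takes the value `1` on the empty word, agrees with the convergent multiple zeta
values on admissible words, and is a homomorphism for the stuffle product. -/
structure IsStuffleReg (Z : List ℕ → ℝ) : Prop where
  empty : Z [] = 1
  conv : ∀ l : List ℕ, (∀ i ∈ l, 0 < i) → 2 ≤ l.getLastD 2 → Z l = MZV l
  mul : ∀ u v : List ℕ, (∀ i ∈ u, 0 < i) → (∀ i ∈ v, 0 < i) →
    Z u * Z v = ((stuffle u v).map Z).sum

/-- The star version `ζ^{⋆,*}(k₁,…,k_d)`: the sum of `Z` over all contractions. -/
noncomputable def zetaStarOf (Z : List ℕ → ℝ) (l : List ℕ) : ℝ :=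
  ((contractions l).map Z).sum

/-- `ζ_a^*(l₁,…,l_r) = (-1)^a ∑_{a₁+⋯+a_r=a} ζ^*(l₁+a₁,…,l_r+a_r) ∏ C(l_i-1+a_i,a_i)`. -/
noncomputable def zetaA (Z : List ℕ → ℝ) (a : ℕ) (l : List ℕ) : ℝ :=
  (-1 : ℝ) ^ a *
    ∑ f ∈ (Fintype.piFinset fun _ : Fin l.length => Finset.range (a + 1)).filter
        (fun f => ∑ i, f i = a),
      Z (List.ofFn fun i => l.get i + f i) *
        ∏ i, (Nat.choose (l.get i - 1 + f i) (f i) : ℝ)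

/-- `δ^{k₁,…,k_d}`: equal to `(-1)^n π^{2n}/(2n)!` if `(k₁,…,k_d) = (1,…,1)` has even
length `2n`, and `0` otherwise. -/
noncomputable def deltaVal (l : List ℕ) : ℝ :=
  if l.all (· = 1) ∧ l.length % 2 = 0 then
    (-1 : ℝ) ^ (l.length / 2) * π ^ l.length / (Nat.factorial l.length) else 0

lemma stuffle_nil_left (v : List ℕ) : stuffle [] v = {v} := by
  cases v <;> simp [stuffle]

lemma stuffle_nil_right (u : List ℕ) : stuffle u [] = {u} := by
  cases u <;> simp [stuffle]

lemma stuffle_cons_one (a : ℕ) (u : List ℕ) :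
    stuffle (a :: u) [1] = (stuffle u [1]).map (a :: ·) + {1 :: a :: u} + {(a + 1) :: u} := by
  rw [show ([1] : List ℕ) = 1 :: [] from rfl, stuffle, stuffle_nil_right, stuffle_nil_right]
  simp

/-- number of trailing ones -/
def tc : List ℕ → ℕ
  | [] => 0
  | a :: u => if a = 1 ∧ tc u = u.length then u.length + 1 else tc u

lemma tc_cons (a : ℕ) (u : List ℕ) :
    tc (a :: u) = if a = 1 ∧ tc u = u.length then u.length + 1 else tc u := rfl

lemma tc_le_length (w : List ℕ) : tc w ≤ w.length := by
  induction w with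
  | nil => simp [tc]
  | cons a u ih =>
    rw [tc_cons]; split
    · simp
    · simpa using Nat.le_succ_of_le ih

lemma tc_le_tc_cons (a : ℕ) (u : List ℕ) : tc u ≤ tc (a :: u) := by
  rw [tc_cons]; split
  · exact Nat.le_succ_of_le (tc_le_length u)
  · exact le_rfl

lemma tc_append_one (u : List ℕ) : tc (u ++ [1]) = tc u + 1 := by
  induction u with
  | nil => simp [tc]
  | cons a u ih =>
    show tc (a :: (u ++ [1])) = _
    rw [tc_cons, ih, tc_cons]
    simp only [List.length_append, List.length_cons, List.length_nil]
    by_cases h : a = 1 ∧ tc u = u.length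
    · rw [if_pos ⟨h.1, by omega⟩, if_pos h]
    · rw [if_neg (fun hc => h ⟨hc.1, by omega⟩), if_neg h]

lemma ones_comm_of_tc_eq_length (w : List ℕ) (h : tc w = w.length) : 1 :: w = w ++ [1] := by
  induction w with
  | nil => rfl
  | cons a u ih =>
    rw [tc_cons] at h
    split at h
    · next hc =>
      obtain ⟨rfl, h2⟩ := hc
      have := ih h2
      simp only [List.cons_append]
      rw [← this]
    · exact absurd h (by have := tc_le_length u; simp; omega)

lemma getLastD_of_tc_eq_zero (w : List ℕ) (hw : ∀ i ∈ w, 0 < i) (h : tc w = 0) :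
    2 ≤ w.getLastD 2 := by
  induction w with
  | nil => simp
  | cons a u ih =>
    rw [tc_cons] at h
    split at h
    · omega
    · next hc =>
      cases u with
      | nil =>
        have h1 : a ≠ 1 := fun he => hc ⟨he, rfl⟩
        have := hw a (by simp)
        rw [List.getLastD_cons, List.getLastD_nil]
        omega
      | cons b v =>
        rw [List.getLastD_cons, List.getLastD_cons]
        have := ih (fun i hi => hw i (List.mem_cons_of_mem _ hi)) h
        rwa [List.getLastD_cons] at this

lemma exists_append_of_tc_pos (w : List ℕ) (h : 0 < tc w) : ∃ u, w = u ++ [1] := by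
  induction w with
  | nil => simp [tc] at h
  | cons a u ih =>
    rw [tc_cons] at h
    split at h
    · next hc =>
      obtain ⟨rfl, h2⟩ := hc
      exact ⟨u, ones_comm_of_tc_eq_length u h2⟩
    · obtain ⟨v, rfl⟩ := ih h
      exact ⟨a :: v, rfl⟩

lemma mem_stuffle_one_self (u : List ℕ) : u ++ [1] ∈ stuffle u [1] := by
  induction u with
  | nil => simp [stuffle_nil_left]
  | cons a u ih =>
    rw [stuffle_cons_one]
    exact Multiset.mem_add.2 (Or.inl (Multiset.mem_add.2 (Or.inl
      (Multiset.mem_map.2 ⟨u ++ [1], ih, rfl⟩))))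

lemma card_stuffle_one (u : List ℕ) : Multiset.card (stuffle u [1]) = 2 * u.length + 1 := by
  induction u with
  | nil => simp [stuffle_nil_left]
  | cons a u ih =>
    rw [stuffle_cons_one]
    simp only [Multiset.card_add, Multiset.card_map, Multiset.card_singleton, ih,
      List.length_cons]
    ring

lemma stuffle_one_struct (u : List ℕ) (hu : ∀ i ∈ u, 0 < i) :
    ∀ y ∈ stuffle u [1], (∀ i ∈ y, 0 < i) ∧ u.length ≤ y.length ∧ y.length ≤ u.length + 1 ∧
      (y ≠ u ++ [1] → tc y ≤ tc u) := by
  induction u with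
  | nil =>
    intro y hy
    rw [stuffle_nil_left] at hy
    rw [Multiset.mem_singleton] at hy; subst hy
    exact ⟨by simp, by simp, by simp, fun h => absurd rfl h⟩
  | cons a u ih =>
    intro y hy
    have ha : 0 < a := hu a (by simp)
    have hu' : ∀ i ∈ u, 0 < i := fun i hi => hu i (List.mem_cons_of_mem _ hi)
    rw [stuffle_cons_one] at hy
    rcases Multiset.mem_add.1 hy with hy | hy
    · rcases Multiset.mem_add.1 hy with hy | hy
      · -- y = a :: x with x ∈ stuffle u [1]
        obtain ⟨x, hx, rfl⟩ := Multiset.mem_map.1 hy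
        obtain ⟨hpos, hlen1, hlen2, htc⟩ := ih hu' x hx
        refine ⟨?_, by simpa using Nat.succ_le_succ hlen1,
          by simpa using Nat.succ_le_succ hlen2, ?_⟩
        · intro i hi
          rcases List.mem_cons.1 hi with rfl | hi
          · exact ha
          · exact hpos i hi
        · intro hne
          have hxne : x ≠ u ++ [1] := fun he => hne (by rw [he]; rfl)
          have h1 := htc hxne
          rw [tc_cons, tc_cons]
          split
          · next hc =>
            obtain ⟨rfl, h2⟩ := hc
            have h3 : tc u = u.length := by
              have := tc_le_length u
              omega
            rw [if_pos ⟨rfl, h3⟩]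
            omega
          · split
            · exact le_trans h1 (le_trans (tc_le_length u) (Nat.le_succ _))
            · exact h1
      · -- y = 1 :: a :: u
        rw [Multiset.mem_singleton] at hy; subst hy
        refine ⟨?_, by simp, by simp, ?_⟩
        · intro i hi
          rcases List.mem_cons.1 hi with rfl | hi
          · exact one_pos
          · exact hu i hi
        · intro hne
          rw [tc_cons]
          split
          · next hc =>
            exact absurd (ones_comm_of_tc_eq_length _ hc.2) hne
          · exact le_rfl
    · -- y = (a+1) :: u
      rw [Multiset.mem_singleton] at hy; subst hy
      refine ⟨?_, by simp, by simp, fun _ => ?_⟩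
      · intro i hi
        rcases List.mem_cons.1 hi with rfl | hi
        · omega
        · exact hu' i hi
      · rw [tc_cons, if_neg (fun hc => by omega)]
        exact tc_le_tc_cons a u

lemma summable_pnat_rpow {p : ℝ} (hp : 1 < p) :
    Summable (fun m : ℕ+ => 1 / ((m : ℕ) : ℝ) ^ p) := by
  have h := (Real.summable_one_div_nat_rpow.2 hp).subtype {n : ℕ | 0 < n}
  exact h

lemma summable_pi_prod {p : ℝ} (hp : 1 < p) (n : ℕ) :
    Summable (fun m : Fin n → ℕ+ => ∏ i, 1 / ((m i : ℕ) : ℝ) ^ p) := by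
  induction n with
  | zero =>
    simp only [Finset.univ_eq_empty, Finset.prod_empty]
    exact Summable.of_finite
  | succ n ih =>
    have h2 := (summable_pnat_rpow hp).mul_of_nonneg ih
      (fun m => by positivity) (fun m => Finset.prod_nonneg fun i _ => by positivity)
    have h3 := ((Fin.consEquiv (fun _ : Fin (n+1) => ℕ+)).symm.summable_iff).2 h2
    refine h3.congr fun m => ?_
    simp only [Fin.consEquiv_symm_apply, Function.comp_apply]
    rw [Fin.prod_univ_succ]
    rfl

lemma key_aux (n r : ℕ) (hn : 0 < n) (hlen : n ≤ r) (K : Fin n → ℕ) (hK : ∀ i, 1 ≤ K i)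
    (hKl : 2 ≤ K ⟨n-1, by omega⟩) (c : Fin n → ℝ) (hc1 : ∀ i, 1 ≤ c i)
    (hcj : ∀ i, c i ≤ c ⟨n-1, by omega⟩) :
    (∏ i, 1 / c i ^ K i) ≤ ∏ i, 1 / c i ^ (1 + 1/(r+1) : ℝ) := by
  set ε : ℝ := 1/(r+1) with hedef
  have hε : 0 < ε := by positivity
  have hεn : ε * n ≤ 1 := by
    rw [hedef, div_mul_eq_mul_div, one_mul, div_le_one (by positivity)]
    have : (n : ℝ) ≤ (r : ℝ) := by exact_mod_cast hlen
    linarith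
  have hcpos : ∀ i, (0:ℝ) < c i := fun i => lt_of_lt_of_le one_pos (hc1 i)
  set j : Fin n := ⟨n - 1, by omega⟩ with hjdef
  have hprodB : (0:ℝ) < ∏ i, c i ^ (1 + ε : ℝ) :=
    Finset.prod_pos fun i _ => Real.rpow_pos_of_pos (hcpos i) _
  have main : (∏ i, c i ^ (1 + ε : ℝ)) ≤ ∏ i, c i ^ K i := by
    have step1 : (∏ i, c i ^ (1 + ε : ℝ)) = (∏ i, c i) * ∏ i, c i ^ ε := by
      rw [← Finset.prod_mul_distrib]
      exact Finset.prod_congr rfl fun i _ => by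
        rw [Real.rpow_add (hcpos i), Real.rpow_one]
    have step2 : (∏ i, c i ^ ε) ≤ c j := by
      calc (∏ i, c i ^ ε) ≤ ∏ _i : Fin n, c j ^ ε :=
            Finset.prod_le_prod (fun i _ => (Real.rpow_pos_of_pos (hcpos i) _).le)
              (fun i _ => Real.rpow_le_rpow (hcpos i).le (hcj i) hε.le)
        _ = (c j ^ ε) ^ (n : ℕ) := by
            rw [Finset.prod_const, Finset.card_univ, Fintype.card_fin]
        _ = c j ^ (ε * n) := by
            rw [← Real.rpow_natCast (c j ^ ε) n, ← Real.rpow_mul (hcpos j).le]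
        _ ≤ c j ^ (1:ℝ) := Real.rpow_le_rpow_of_exponent_le (hc1 j) hεn
        _ = c j := Real.rpow_one _
    have step3 : (∏ i, c i) * c j ≤ ∏ i, c i ^ K i := by
      have e3 : (∏ i, c i) * c j = ∏ i, (c i * if i = j then c i else 1) := by
        rw [Finset.prod_mul_distrib]
        congr 1
        rw [Finset.prod_ite_eq' Finset.univ j c, if_pos (Finset.mem_univ j)]
      rw [e3]
      refine Finset.prod_le_prod (fun i _ => ?_) (fun i _ => ?_)
      · rcases eq_or_ne i j with rfl | hij
        · rw [if_pos rfl]; exact mul_nonneg (hcpos _).le (hcpos _).le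
        · rw [if_neg hij, mul_one]; exact (hcpos i).le
      · rcases eq_or_ne i j with rfl | hij
        · rw [if_pos rfl, ← sq]
          exact pow_le_pow_right₀ (hc1 _) hKl
        · rw [if_neg hij, mul_one]
          exact le_self_pow₀ (hc1 i) (by have := hK i; omega)
    calc (∏ i, c i ^ (1 + ε : ℝ)) = (∏ i, c i) * ∏ i, c i ^ ε := step1
      _ ≤ (∏ i, c i) * c j := by
          refine mul_le_mul_of_nonneg_left step2 ?_
          exact Finset.prod_nonneg fun i _ => (hcpos i).le
      _ ≤ ∏ i, c i ^ K i := step3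
  calc (∏ i, 1 / c i ^ K i) = 1 / ∏ i, c i ^ K i := by
        rw [Finset.prod_div_distrib, Finset.prod_const_one]
    _ ≤ 1 / ∏ i, c i ^ (1 + ε : ℝ) := one_div_le_one_div_of_le hprodB main
    _ = ∏ i, 1 / c i ^ (1 + ε : ℝ) := by
        rw [Finset.prod_div_distrib, Finset.prod_const_one]

lemma key_pointwise (r : ℕ) (k : List ℕ) (hk : ∀ i ∈ k, 0 < i) (hlast : 2 ≤ k.getLastD 2)
    (hlen : k.length ≤ r) (m : Fin k.length → ℕ+) (hm : StrictMono m) :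
    (∏ i, 1 / ((m i : ℕ) : ℝ) ^ k.get i) ≤
      ∏ i, 1 / ((m i : ℕ) : ℝ) ^ (1 + 1/(r+1) : ℝ) := by
  rcases Nat.eq_zero_or_pos k.length with h0 | hn
  · haveI : IsEmpty (Fin k.length) := by rw [h0]; infer_instance
    simp
  have h1 : k ≠ [] := List.length_pos_iff.mp hn
  have hlast' : 2 ≤ k.get ⟨k.length - 1, by omega⟩ := by
    rw [List.getLastD_eq_getLast?, List.getLast?_eq_getLast h1] at hlast
    rwa [List.getLast_eq_getElem h1] at hlast
  refine key_aux k.length r hn hlen (fun i => k.get i)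
    (fun i => hk _ (k.get_mem i)) hlast' (fun i => ((m i : ℕ) : ℝ))
    (fun i => ?_) (fun i => ?_)
  · show (1:ℝ) ≤ ((m i : ℕ) : ℝ)
    exact_mod_cast (m i).2
  · have hij : i ≤ (⟨k.length - 1, by omega⟩ : Fin k.length) := by
      rw [Fin.le_def]
      have := i.2
      simpa using by omega
    have := hm.monotone hij
    show ((m i : ℕ) : ℝ) ≤ ((m ⟨k.length - 1, by omega⟩ : ℕ) : ℝ)
    exact_mod_cast this

lemma mzv_bound (r : ℕ) : ∃ C : ℝ, 0 ≤ C ∧ ∀ k : List ℕ, k.length ≤ r →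
    (∀ i ∈ k, 0 < i) → 2 ≤ k.getLastD 2 → |MZV k| ≤ C := by
  have h0p : (0:ℝ) < 1/(r+1) := by positivity
  have hp : (1:ℝ) < 1 + 1/(r+1) := by linarith
  refine ⟨∑ n ∈ Finset.range (r+1),
      ∑' m : {f : Fin n → ℕ+ // StrictMono f},
        ∏ i, 1 / ((m.1 i : ℕ) : ℝ) ^ (1 + 1/(r+1) : ℝ), ?_, ?_⟩
  · refine Finset.sum_nonneg fun n _ => tsum_nonneg fun m =>
      Finset.prod_nonneg fun i _ => by positivity
  · intro k hlen hk hlast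
    have hGfull := summable_pi_prod hp k.length
    have hGsub : Summable (fun m : {f : Fin k.length → ℕ+ // StrictMono f} =>
        ∏ i, 1 / ((m.1 i : ℕ) : ℝ) ^ (1 + 1/(r+1) : ℝ)) := by
      have := hGfull.subtype {f | StrictMono f}
      exact this
    have hF : Summable (fun m : {f : Fin k.length → ℕ+ // StrictMono f} =>
        ∏ i, 1 / ((m.1 i : ℕ) : ℝ) ^ k.get i) :=
      Summable.of_nonneg_of_le
        (fun m => Finset.prod_nonneg fun i _ => by positivity)
        (fun m => key_pointwise r k hk hlast hlen m.1 m.2) hGsub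
    have h1 : MZV k ≤ ∑' m : {f : Fin k.length → ℕ+ // StrictMono f},
        ∏ i, 1 / ((m.1 i : ℕ) : ℝ) ^ (1 + 1/(r+1) : ℝ) :=
      Summable.tsum_le_tsum (fun m => key_pointwise r k hk hlast hlen m.1 m.2) hF hGsub
    have h0 : 0 ≤ MZV k :=
      tsum_nonneg fun m => Finset.prod_nonneg fun i _ => by positivity
    rw [abs_of_nonneg h0]
    refine h1.trans ?_
    exact Finset.single_le_sum
      (f := fun n => ∑' m : {f : Fin n → ℕ+ // StrictMono f},
        ∏ i, 1 / ((m.1 i : ℕ) : ℝ) ^ (1 + 1/(r+1) : ℝ))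
      (fun n _ => tsum_nonneg fun m => Finset.prod_nonneg fun i _ => by positivity)
      (Finset.mem_range.2 (by omega))

lemma abs_multiset_sum_le (S : Multiset (List ℕ)) (f : List ℕ → ℝ) (M : ℝ) (hM : 0 ≤ M)
    (h : ∀ y ∈ S, |f y| ≤ M) : |(S.map f).sum| ≤ Multiset.card S * M := by
  induction S using Multiset.induction_on with
  | empty => simp
  | cons a s ih =>
    simp only [Multiset.map_cons, Multiset.sum_cons, Multiset.card_cons]
    calc |f a + (s.map f).sum| ≤ |f a| + |(s.map f).sum| := abs_add_le _ _
      _ ≤ M + Multiset.card s * M :=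
        add_le_add (h a (Multiset.mem_cons_self a s))
          (ih fun y hy => h y (Multiset.mem_cons_of_mem hy))
      _ = (Multiset.card s + 1 : ℕ) * M := by push_cast; ring

lemma Z_bound (Z : List ℕ → ℝ) (hZ : IsStuffleReg Z) (r : ℕ) :
    ∃ M : ℝ, 0 ≤ M ∧ ∀ w : List ℕ, w.length ≤ r → (∀ i ∈ w, 0 < i) → |Z w| ≤ M := by
  obtain ⟨C, hC0, hC⟩ := mzv_bound r
  set q : ℝ := |Z [1]| + (2*r+1) with hqdef
  have hq1 : 1 ≤ q := by
    have h1 : (0:ℝ) ≤ |Z [1]| := abs_nonneg _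
    have h2 : (1:ℝ) ≤ 2*(r:ℝ)+1 := by
      have : (0:ℝ) ≤ (r:ℝ) := Nat.cast_nonneg r
      linarith
    linarith
  have hq0 : 0 ≤ q := le_trans zero_le_one hq1
  have claim : ∀ t : ℕ, ∀ w : List ℕ, w.length ≤ r → (∀ i ∈ w, 0 < i) →
      tc w ≤ t → |Z w| ≤ C * q ^ t := by
    intro t
    induction t with
    | zero =>
      intro w hlen hw htc
      rw [pow_zero, mul_one]
      rw [hZ.conv w hw (getLastD_of_tc_eq_zero w hw (Nat.le_zero.1 htc))]
      exact hC w hlen hw (getLastD_of_tc_eq_zero w hw (Nat.le_zero.1 htc))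
    | succ t ih =>
      intro w hlen hw htc
      have hqt : 0 ≤ C * q ^ t := mul_nonneg hC0 (pow_nonneg hq0 t)
      by_cases hle : tc w ≤ t
      · refine (ih w hlen hw hle).trans ?_
        have : q ^ t ≤ q ^ (t+1) := pow_le_pow_right₀ hq1 (Nat.le_succ t)
        exact mul_le_mul_of_nonneg_left this hC0
      · have htc' : tc w = t + 1 := by omega
        obtain ⟨u, rfl⟩ := exists_append_of_tc_pos w (by omega)
        have htcu : tc u = t := by
          have := tc_append_one u
          omega
        have hu : ∀ i ∈ u, 0 < i := fun i hi => hw i (List.mem_append_left _ hi)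
        have hlen1 : u.length + 1 ≤ r := by
          rw [List.length_append] at hlen
          simpa using hlen
        have hlenu : u.length ≤ r := Nat.le_of_succ_le hlen1
        have hmul := hZ.mul u [1] hu (by intro i hi; simp at hi; omega)
        set S := stuffle u [1] with hSdef
        have hwmem : u ++ [1] ∈ S := mem_stuffle_one_self u
        set T := S.filter (fun y => ¬ y = u ++ [1]) with hTdef
        set m := S.count (u ++ [1]) with hmdef
        have hm1 : 1 ≤ m := Multiset.count_pos.2 hwmem
        have hsum : (S.map Z).sum = m * Z (u ++ [1]) + ((T.map Z).sum) := by
          conv_lhs => rw [← Multiset.filter_add_not (fun y => y = u ++ [1]) S]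
          rw [Multiset.map_add, Multiset.sum_add]
          congr 1
          rw [Multiset.filter_eq', hmdef]
          rw [Multiset.map_replicate, Multiset.sum_replicate, nsmul_eq_mul]
        have hTbound : ∀ y ∈ T, |Z y| ≤ C * q ^ t := by
          intro y hy
          rw [hTdef, Multiset.mem_filter] at hy
          obtain ⟨hyS, hyne⟩ := hy
          obtain ⟨hpos, _, hlen2, htcy⟩ := stuffle_one_struct u hu y hyS
          exact ih y (by omega) hpos (by rw [← htcu]; exact htcy hyne)
        have hcardT : (Multiset.card T : ℝ) ≤ 2*r+1 := by
          have h1 : Multiset.card T ≤ Multiset.card S :=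
            Multiset.card_le_card (Multiset.filter_le _ _)
          have h2 := card_stuffle_one u
          rw [← hSdef] at h2
          have : Multiset.card T ≤ 2*r+1 := by omega
          exact_mod_cast this
        have hTsum : |(T.map Z).sum| ≤ (2*r+1) * (C * q ^ t) := by
          refine le_trans (abs_multiset_sum_le T Z (C * q ^ t) hqt hTbound) ?_
          exact mul_le_mul_of_nonneg_right hcardT hqt
        have hZu : |Z u| ≤ C * q ^ t := ih u hlenu hu (le_of_eq htcu)
        have key : (m:ℝ) * Z (u ++ [1]) = Z u * Z [1] - (T.map Z).sum := by
          rw [hmul, hsum]; ring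
        have habs : |Z (u ++ [1])| ≤ (m:ℝ) * |Z (u ++ [1])| := by
          refine le_mul_of_one_le_left (abs_nonneg _) ?_
          exact_mod_cast hm1
        calc |Z (u ++ [1])| ≤ (m:ℝ) * |Z (u ++ [1])| := habs
          _ = |(m:ℝ) * Z (u ++ [1])| := by
              rw [abs_mul, abs_of_nonneg (by positivity : (0:ℝ) ≤ (m:ℝ))]
          _ = |Z u * Z [1] - (T.map Z).sum| := by rw [key]
          _ ≤ |Z u * Z [1]| + |(T.map Z).sum| := abs_sub _ _
          _ ≤ (C * q ^ t) * |Z [1]| + (2*r+1) * (C * q ^ t) := by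
              refine add_le_add ?_ hTsum
              rw [abs_mul]
              exact mul_le_mul_of_nonneg_right hZu (abs_nonneg _)
          _ = C * q ^ (t+1) := by rw [pow_succ, hqdef]; ring
  refine ⟨C * q ^ r, mul_nonneg hC0 (pow_nonneg hq0 r), fun w hlen hw => ?_⟩
  exact claim r w hlen hw (le_trans (tc_le_length w) hlen)


/-- The power series `∑_{a≥0} z^a ζ_a^*(l₁,…,l_r)` converges absolutely for `|z| < 1`. -/
theorem streg_hurwitz_summable (Z : List ℕ → ℝ) (hZ : IsStuffleReg Z)
    (l : List ℕ) (hl : ∀ i ∈ l, 0 < i) (z : ℂ) (hz : ‖z‖ < 1) :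
    Summable (fun a : ℕ => ‖z ^ a * ((zetaA Z a l : ℝ) : ℂ)‖) := by
  obtain ⟨M, hM0, hM⟩ := Z_bound Z hZ l.length
  set r := l.length with hrdef
  set E := l.sum with hEdef
  set x := ‖z‖ with hxdef
  have hx0 : (0:ℝ) ≤ x := norm_nonneg z
  set D := r + E * r with hDdef
  set K := M * ((E:ℝ)+1)^(E*r) with hKdef
  have h2 : ∀ a : ℕ, |zetaA Z a l| ≤
      ((a:ℝ)+1)^r * (M * ((E:ℝ)+(a:ℝ)+1)^(E*r)) := by
    intro a
    set B : ℝ := ((E:ℝ)+(a:ℝ)+1)^(E*r) with hBdef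
    have hB0 : (0:ℝ) ≤ B := by positivity
    have hterm : ∀ f ∈ (Fintype.piFinset fun _ : Fin l.length =>
        Finset.range (a + 1)).filter (fun f => ∑ i, f i = a),
        |Z (List.ofFn fun i => l.get i + f i) *
          ∏ i, (Nat.choose (l.get i - 1 + f i) (f i) : ℝ)| ≤ M * B := by
      intro f hf
      have hpif := (Finset.mem_filter.1 hf).1
      have hfa : ∀ i, f i ≤ a := by
        intro i
        have := Fintype.mem_piFinset.1 hpif i
        rw [Finset.mem_range] at this
        omega
      have hP0 : (0:ℝ) ≤ ∏ i, (Nat.choose (l.get i - 1 + f i) (f i) : ℝ) :=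
        Finset.prod_nonneg fun i _ => Nat.cast_nonneg _
      have hZw : |Z (List.ofFn fun i => l.get i + f i)| ≤ M := by
        refine hM _ (by rw [List.length_ofFn]) ?_
        intro i hi
        rw [List.mem_ofFn] at hi
        obtain ⟨j, rfl⟩ := hi
        have := hl _ (l.get_mem j)
        exact Nat.lt_of_lt_of_le this (Nat.le_add_right _ _)
      have hN : (∏ i, Nat.choose (l.get i - 1 + f i) (f i)) ≤ (E+a+1)^(E*r) := by
        calc (∏ i, Nat.choose (l.get i - 1 + f i) (f i))
            ≤ ∏ _i : Fin r, (E+a+1)^E := by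
              refine Finset.prod_le_prod' fun i _ => ?_
              have h1 : l.get i ≤ E := List.le_sum_of_mem (l.get_mem i)
              calc (l.get i - 1 + f i).choose (f i)
                  = (f i + (l.get i - 1)).choose (f i) := by rw [Nat.add_comm]
                _ = (f i + (l.get i - 1)).choose (l.get i - 1) := Nat.choose_symm_add
                _ ≤ (f i + (l.get i - 1))^(l.get i - 1) := Nat.choose_le_pow _ _
                _ ≤ (E+a+1)^(l.get i - 1) := Nat.pow_le_pow_left (by have := hfa i; omega) _
                _ ≤ (E+a+1)^E := Nat.pow_le_pow_right (by omega) (by omega)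
          _ = (E+a+1)^(E*r) := by
              rw [Finset.prod_const, Finset.card_univ, Fintype.card_fin, ← pow_mul]
      have hPB : (∏ i, (Nat.choose (l.get i - 1 + f i) (f i) : ℝ)) ≤ B := by
        rw [← Nat.cast_prod]
        rw [hBdef]
        calc ((∏ i, Nat.choose (l.get i - 1 + f i) (f i) : ℕ) : ℝ)
            ≤ (((E+a+1)^(E*r) : ℕ) : ℝ) := Nat.cast_le.2 hN
          _ = ((E:ℝ)+(a:ℝ)+1)^(E*r) := by push_cast; ring
      rw [abs_mul, abs_of_nonneg hP0]
      exact mul_le_mul hZw hPB hP0 hM0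
    have hcard : ((((Fintype.piFinset fun _ : Fin l.length =>
        Finset.range (a + 1)).filter (fun f => ∑ i, f i = a)).card : ℝ)) ≤ ((a:ℝ)+1)^r := by
      have h1 := Finset.card_filter_le (Fintype.piFinset fun _ : Fin l.length =>
        Finset.range (a + 1)) (fun f => ∑ i, f i = a)
      have h2 : (Fintype.piFinset fun _ : Fin l.length => Finset.range (a + 1)).card
          = (a+1)^r := by
        rw [Fintype.card_piFinset]
        simp [hrdef]
      calc (_ : ℝ) ≤ (((a+1)^r : ℕ) : ℝ) := Nat.cast_le.2 (h2 ▸ h1)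
        _ = ((a:ℝ)+1)^r := by push_cast; ring
    rw [zetaA, abs_mul, abs_pow, abs_neg, abs_one, one_pow, one_mul]
    calc |∑ f ∈ (Fintype.piFinset fun _ : Fin l.length =>
            Finset.range (a + 1)).filter (fun f => ∑ i, f i = a),
          Z (List.ofFn fun i => l.get i + f i) *
            ∏ i, (Nat.choose (l.get i - 1 + f i) (f i) : ℝ)|
        ≤ ∑ f ∈ (Fintype.piFinset fun _ : Fin l.length =>
            Finset.range (a + 1)).filter (fun f => ∑ i, f i = a),
          |Z (List.ofFn fun i => l.get i + f i) *
            ∏ i, (Nat.choose (l.get i - 1 + f i) (f i) : ℝ)| :=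
          Finset.abs_sum_le_sum_abs _ _
      _ ≤ ((Fintype.piFinset fun _ : Fin l.length =>
            Finset.range (a + 1)).filter (fun f => ∑ i, f i = a)).card • (M * B) :=
          Finset.sum_le_card_nsmul _ _ _ hterm
      _ = ((((Fintype.piFinset fun _ : Fin l.length =>
            Finset.range (a + 1)).filter (fun f => ∑ i, f i = a)).card : ℝ)) * (M * B) :=
          nsmul_eq_mul _ _
      _ ≤ ((a:ℝ)+1)^r * (M * B) :=
          mul_le_mul_of_nonneg_right hcard (mul_nonneg hM0 hB0)
  have hbound : ∀ a : ℕ, ‖z ^ a * ((zetaA Z a l : ℝ) : ℂ)‖ ≤ K * (((a:ℝ)+1)^D * x^a) := by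
    intro a
    have ha0 : (0:ℝ) ≤ (a:ℝ) := Nat.cast_nonneg a
    have hE0 : (0:ℝ) ≤ (E:ℝ) := Nat.cast_nonneg E
    calc ‖z ^ a * ((zetaA Z a l : ℝ) : ℂ)‖ = x^a * |zetaA Z a l| := by
          rw [norm_mul, norm_pow, Complex.norm_real, Real.norm_eq_abs]
      _ ≤ x^a * (((a:ℝ)+1)^r * (M * ((E:ℝ)+(a:ℝ)+1)^(E*r))) := by
          refine mul_le_mul_of_nonneg_left (h2 a) (by positivity)
      _ ≤ x^a * (((a:ℝ)+1)^r * (M * (((E:ℝ)+1)*((a:ℝ)+1))^(E*r))) := by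
          refine mul_le_mul_of_nonneg_left ?_ (by positivity)
          refine mul_le_mul_of_nonneg_left ?_ (by positivity)
          refine mul_le_mul_of_nonneg_left ?_ hM0
          refine pow_le_pow_left₀ (by positivity) (by nlinarith) _
      _ = K * (((a:ℝ)+1)^D * x^a) := by
          rw [hKdef, hDdef, mul_pow, pow_add]
          ring
  have hxlt : ‖x‖ < 1 := by rwa [Real.norm_of_nonneg hx0]
  have hmaj : Summable (fun a : ℕ => K * (((a:ℝ)+1)^D * x^a)) := by
    refine Summable.mul_left K ?_
    have hexp : ∀ a : ℕ, ((a:ℝ)+1)^D * x^a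
        = ∑ j ∈ Finset.range (D+1), (D.choose j : ℝ) * ((a:ℝ)^j * x^a) := by
      intro a
      rw [add_pow]
      rw [Finset.sum_mul]
      refine Finset.sum_congr rfl fun j _ => ?_
      ring
    refine Summable.congr ?_ fun a => (hexp a).symm
    refine summable_sum fun j _ => ?_
    exact ((summable_pow_mul_geometric_of_norm_lt_one j hxlt).mul_left _)
  exact Summable.of_nonneg_of_le (fun a => norm_nonneg _) hbound hmaj
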